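/- (Lemma 2, prior 2D result restated in the paper.) Let d = 2, let m be a positive integer, and let i, j ∈ [2]. For any two arrays X ∈ Σ_q^{(m+δ₁(i)) × (m+δ₂(i))} and Y ∈ Σ_q^{(m+δ₁(j)) × (m+δ₂(j))}, where δ_ℓ(i) = 1 if ℓ = i and 0 otherwise, it holds that D_{e_i}(X) ∩ D_{e_j}(Y) ≠ ∅ if and only if I_{e_j}(X) ∩ I_{e_i}(Y) ≠ ∅. -/
import Mathlib


/-- A `q`-ary `d`-dimensional array: a size vector `size : Fin d → ℕ` together with an
entry of the alphabet `Fin q` for every index tuple inside the box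
`[size 0] × ⋯ × [size (d-1)]`. -/
structure Arr (q d : ℕ) where
  size : Fin d → ℕ
  val : ∀ x : Fin d → ℕ, (∀ i, x i < size i) → Fin q

/-- The index map associated with inserting a hyperplane at position `k` along axis `i`:
coordinates below `k` stay put, the others are shifted up by one (so that position `k`
along axis `i` is the freshly inserted hyperplane). -/
def insIdx {d : ℕ} (i : Fin d) (k : ℕ) (x : Fin d → ℕ) : Fin d → ℕ :=
  fun j => if j = i then (if x i < k then x i else x i + 1) else x j

/-- `InsertsTo i A B`: the array `B` is obtained from the array `A` by a single
`x_i`-insertion, i.e. by inserting one `(d-1)`-dimensional hyperplane (with arbitrary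
entries) orthogonal to the `x_i`-axis. -/
def InsertsTo {q d : ℕ} (i : Fin d) (A B : Arr q d) : Prop :=
  (∀ j, B.size j = if j = i then A.size j + 1 else A.size j) ∧
  ∃ k ≤ A.size i, ∀ (x : Fin d → ℕ) (hx : ∀ j, x j < A.size j)
    (hx' : ∀ j, insIdx i k x j < B.size j),
    A.val x hx = B.val (insIdx i k x) hx'

/-- `DeletesTo i A B`: the array `B` is obtained from `A` by a single `x_i`-deletion,
the inverse operation of an `x_i`-insertion. -/
def DeletesTo {q d : ℕ} (i : Fin d) (A B : Arr q d) : Prop :=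
  InsertsTo i B A

/-- `Steps R t A B`: the array `B` is obtained from the array `A` by performing, for each
axis `i`, exactly `t i` operations of type `R i` (in some order). -/
inductive Steps {q d : ℕ} (R : Fin d → Arr q d → Arr q d → Prop) :
    (Fin d → ℕ) → Arr q d → Arr q d → Prop
  | refl (A : Arr q d) : Steps R 0 A A
  | step {t : Fin d → ℕ} {A B C : Arr q d} (i : Fin d) :
      R i A B → Steps R t B C → Steps R (t + Pi.single i 1) A C

/-- The deletion ball `D_t(X)`: all arrays obtainable from `X` by a `t`-deletion,
i.e. by `t i` `x_i`-deletions for each axis `i`. -/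
def delBall {q d : ℕ} (t : Fin d → ℕ) (X : Arr q d) : Set (Arr q d) :=
  {Y | Steps DeletesTo t X Y}

/-- The insertion ball `I_t(X)`: all arrays obtainable from `X` by a `t`-insertion,
i.e. by `t i` `x_i`-insertions for each axis `i`. -/
def insBall {q d : ℕ} (t : Fin d → ℕ) (X : Arr q d) : Set (Arr q d) :=
  {Y | Steps InsertsTo t X Y}

/-- The insertion-deletion ball `ID_t(X)`: all arrays obtainable from `X` by a
`t^del`-deletion followed by a `t^ins`-insertion, for some decomposition
`t = t^ins + t^del`. -/
def insDelBall {q d : ℕ} (t : Fin d → ℕ) (X : Arr q d) : Set (Arr q d) :=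
  {Z | ∃ tins tdel : Fin d → ℕ, tins + tdel = t ∧
    ∃ W ∈ delBall tdel X, Z ∈ insBall tins W}

/-- `Σ_q^{n^{⊗d}}`: the set of `q`-ary `d`-dimensional arrays of cubic size `n × ⋯ × n`. -/
def cube (q d n : ℕ) : Set (Arr q d) := {A | A.size = fun _ => n}

/-- A code `C` is a `t`-deletion-correcting code if the deletion balls `D_t(X)`, `X ∈ C`,
are pairwise disjoint. -/
def IsDelCode {q d : ℕ} (t : Fin d → ℕ) (C : Set (Arr q d)) : Prop :=
  ∀ X ∈ C, ∀ Y ∈ C, X ≠ Y → delBall t X ∩ delBall t Y = ∅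

/-- A code `C` is a `t`-insertion-correcting code if the insertion balls `I_t(X)`,
`X ∈ C`, are pairwise disjoint. -/
def IsInsCode {q d : ℕ} (t : Fin d → ℕ) (C : Set (Arr q d)) : Prop :=
  ∀ X ∈ C, ∀ Y ∈ C, X ≠ Y → insBall t X ∩ insBall t Y = ∅

/-- A code `C` is a `t`-insdel-correcting code if the insertion-deletion balls `ID_t(X)`,
`X ∈ C`, are pairwise disjoint. -/
def IsInsDelCode {q d : ℕ} (t : Fin d → ℕ) (C : Set (Arr q d)) : Prop :=
  ∀ X ∈ C, ∀ Y ∈ C, X ≠ Y → insDelBall t X ∩ insDelBall t Y = ∅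

lemma Arr.val_congr {q d : ℕ} (A : Arr q d) {x y : Fin d → ℕ} (h : x = y)
    (hx : ∀ i, x i < A.size i) (hy : ∀ i, y i < A.size i) : A.val x hx = A.val y hy := by
  subst h; rfl

def remIdx {d : ℕ} (i : Fin d) (k : ℕ) (x : Fin d → ℕ) : Fin d → ℕ :=
  fun t => if t = i then (if x i < k then x i else x i - 1) else x t

lemma remIdx_insIdx {d : ℕ} (i : Fin d) (k : ℕ) (x : Fin d → ℕ) :
    remIdx i k (insIdx i k x) = x := by
  funext t
  simp only [remIdx, insIdx]
  by_cases ht : t = i <;> simp [ht] <;> (try split_ifs) <;> omega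

lemma insIdx_remIdx {d : ℕ} (i : Fin d) (k : ℕ) (x : Fin d → ℕ) (h : x i ≠ k) :
    insIdx i k (remIdx i k x) = x := by
  funext t
  simp only [remIdx, insIdx]
  by_cases ht : t = i <;> simp [ht] <;> (try split_ifs) <;> omega

def insArr {q d : ℕ} (hq : 0 < q) (i : Fin d) (k : ℕ)
    (g : (Fin d → ℕ) → Fin q) (A : Arr q d) : Arr q d where
  size := fun t => if t = i then A.size t + 1 else A.size t
  val := fun x _ =>
    if h : x i ≠ k ∧ ∀ t, remIdx i k x t < A.size t then A.val (remIdx i k x) h.2 else g x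

lemma insArr_insertsTo {q d : ℕ} (hq : 0 < q) (i : Fin d) (k : ℕ)
    (g : (Fin d → ℕ) → Fin q) (A : Arr q d) (hk : k ≤ A.size i) :
    InsertsTo i A (insArr hq i k g A) := by
  refine ⟨fun t => rfl, k, hk, ?_⟩
  intro x hx hx'
  have h1 : insIdx i k x i ≠ k := by simp only [insIdx, if_pos rfl]; split_ifs <;> omega
  have h2 : remIdx i k (insIdx i k x) = x := remIdx_insIdx i k x
  show _ = dite _ _ _
  rw [dif_pos ⟨h1, by rw [h2]; exact hx⟩]
  exact A.val_congr h2.symm hx _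

def delArr {q d : ℕ} (i : Fin d) (k : ℕ) (A : Arr q d) : Arr q d where
  size := fun t => if t = i then A.size t - 1 else A.size t
  val := fun x hx => A.val (insIdx i k x) (by
    intro t
    have h1 := hx t
    simp only [insIdx]
    by_cases ht : t = i
    · subst ht
      have h2 : x t < A.size t - 1 := by simpa using h1
      simp only [if_pos rfl]
      split_ifs <;> omega
    · simp only [if_neg ht] at h1 ⊢; exact h1)

lemma delArr_insertsTo {q d : ℕ} {i : Fin d} {k : ℕ} {A : Arr q d} (hk : k < A.size i) :
    InsertsTo i (delArr i k A) A := by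
  refine ⟨?_, k, ?_, ?_⟩
  · intro t
    simp only [delArr]
    by_cases ht : t = i <;> simp [ht] <;> omega
  · simp only [delArr]
    simp; omega
  · intro x hx hx'
    simp only [delArr]

lemma merge {q d : ℕ} (hq : 0 < q) {i j : Fin d} {Z X Y : Arr q d} {k l : ℕ}
    (hk : k ≤ Z.size i) (hl : l ≤ Z.size j)
    (hsX : ∀ t, X.size t = if t = i then Z.size t + 1 else Z.size t)
    (hvX : ∀ x hx hx', Z.val x hx = X.val (insIdx i k x) hx')
    (hsY : ∀ t, Y.size t = if t = j then Z.size t + 1 else Z.size t)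
    (hvY : ∀ x hx hx', Z.val x hx = Y.val (insIdx j l x) hx')
    (hkl : k ≤ l) :
    ∃ W, InsertsTo j X W ∧ InsertsTo i Y W := by
  rcases eq_or_ne i j with hij | hij
  · -- same axis; substitute j := i
    subst hij
    set g : (Fin d → ℕ) → Fin q := fun z =>
      if hb : ∀ t, (fun t => if t = i then l else z t) t < Y.size t
      then Y.val _ hb else ⟨0, hq⟩ with hg
    refine ⟨insArr hq i (l + 1) g X, insArr_insertsTo hq i (l + 1) g X
      (by rw [hsX i, if_pos rfl]; omega), ?_⟩
    refine ⟨?_, k, by rw [hsY i, if_pos rfl]; omega, ?_⟩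
    · intro t
      show (if t = i then X.size t + 1 else X.size t) = _
      have h1 := hsX t; have h2 := hsY t
      by_cases ht : t = i <;> simp [ht] at h1 h2 ⊢ <;> omega
    · intro x hx hx'
      have hxi : x i < Z.size i + 1 := by have := hx i; rwa [hsY i, if_pos rfl] at this
      show _ = dite _ _ _
      by_cases hr : x i = l
      · -- inserted hyperplane of Y
        have hs1 : insIdx i k x i = l + 1 := by
          simp only [insIdx, if_pos rfl]; split_ifs <;> omega
        rw [dif_neg (by rw [hs1]; simp)]
        show _ = dite _ _ _
        have hupd : (fun t => if t = i then l else insIdx i k x t) = x := by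
          funext t; by_cases ht : t = i <;> simp [ht, insIdx, hr]
        rw [dif_pos (by rw [hupd]; exact hx)]
        exact Y.val_congr (by rw [hupd]) hx _
      · -- old hyperplane
        have hs1 : insIdx i k x i ≠ l + 1 := by
          simp only [insIdx, if_pos rfl]; split_ifs <;> omega
        have hrem : ∀ t, remIdx i (l+1) (insIdx i k x) t < X.size t := by
          intro t
          rw [hsX t]
          have h3 := hx t; rw [hsY t] at h3
          by_cases ht : t = i <;> simp [ht, remIdx, insIdx] at h3 ⊢ <;> (try split_ifs) <;> omega
        rw [dif_pos ⟨hs1, hrem⟩]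
        set z := remIdx i l x with hz
        have hzb : ∀ t, z t < Z.size t := by
          intro t
          have h3 := hx t; rw [hsY t] at h3
          by_cases ht : t = i <;> simp [ht, hz, remIdx] at h3 ⊢ <;> (try split_ifs) <;> omega
        have hz1 : insIdx i l z = x := insIdx_remIdx i l x hr
        have hz2 : insIdx i k z = remIdx i (l+1) (insIdx i k x) := by
          funext t
          by_cases ht : t = i <;> simp [ht, hz, remIdx, insIdx] <;> (try split_ifs) <;> omega
        have hb1 : ∀ t, insIdx i l z t < Y.size t := by rw [hz1]; exact hx
        have hb2 : ∀ t, insIdx i k z t < X.size t := by rw [hz2]; exact hrem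
        calc Y.val x hx = Y.val (insIdx i l z) hb1 := Y.val_congr hz1.symm hx hb1
          _ = Z.val z hzb := (hvY z hzb hb1).symm
          _ = X.val (insIdx i k z) hb2 := hvX z hzb hb2
          _ = _ := X.val_congr hz2 hb2 _
  · -- different axes
    set g : (Fin d → ℕ) → Fin q := fun z =>
      if hb : ∀ t, remIdx i k z t < Y.size t then Y.val (remIdx i k z) hb else ⟨0, hq⟩ with hg
    refine ⟨insArr hq j l g X, insArr_insertsTo hq j l g X
      (by rw [hsX j, if_neg (Ne.symm hij)]; exact hl), ?_⟩
    refine ⟨?_, k, by rw [hsY i, if_neg hij]; exact hk, ?_⟩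
    · intro t
      show (if t = j then X.size t + 1 else X.size t) = _
      have h1 := hsX t; have h2 := hsY t
      by_cases hti : t = i <;> by_cases htj : t = j <;>
        simp [hti, htj, hij, Ne.symm hij] at h1 h2 ⊢ <;> omega
    · intro x hx hx'
      have hyj : insIdx i k x j = x j := by simp [insIdx, Ne.symm hij]
      show _ = dite _ _ _
      by_cases hxj : x j = l
      · rw [dif_neg (by rw [hyj, hxj]; simp)]
        show _ = dite _ _ _
        have hrem : remIdx i k (insIdx i k x) = x := remIdx_insIdx i k x
        rw [dif_pos (by rw [hrem]; exact hx)]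
        exact Y.val_congr (by rw [hrem]) hx _
      · have hrem : ∀ t, remIdx j l (insIdx i k x) t < X.size t := by
          intro t
          rw [hsX t]
          have h3 := hx t; rw [hsY t] at h3
          by_cases hti : t = i <;> by_cases htj : t = j <;>
            simp [hti, htj, hij, Ne.symm hij, remIdx, insIdx] at h3 ⊢ <;> (try split_ifs) <;> omega
        rw [dif_pos ⟨by rw [hyj]; exact hxj, hrem⟩]
        set z := remIdx j l x with hz
        have hzb : ∀ t, z t < Z.size t := by
          intro t
          have h3 := hx t; rw [hsY t] at h3
          by_cases htj : t = j <;> simp [htj, hz, remIdx] at h3 ⊢ <;> (try split_ifs) <;> omega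
        have hz1 : insIdx j l z = x := insIdx_remIdx j l x hxj
        have hz2 : insIdx i k z = remIdx j l (insIdx i k x) := by
          funext t
          by_cases hti : t = i <;> by_cases htj : t = j <;>
            simp [hti, htj, hij, Ne.symm hij, hz, remIdx, insIdx] <;> (try split_ifs) <;> omega
        have hb1 : ∀ t, insIdx j l z t < Y.size t := by rw [hz1]; exact hx
        have hb2 : ∀ t, insIdx i k z t < X.size t := by rw [hz2]; exact hrem
        calc Y.val x hx = Y.val (insIdx j l z) hb1 := Y.val_congr hz1.symm hx hb1
          _ = Z.val z hzb := (hvY z hzb hb1).symm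
          _ = X.val (insIdx i k z) hb2 := hvX z hzb hb2
          _ = _ := X.val_congr hz2 hb2 _

lemma insIdx_comm {d : ℕ} {i j : Fin d} (hij : i ≠ j) (a b : ℕ) (x : Fin d → ℕ) :
    insIdx j b (insIdx i a x) = insIdx i a (insIdx j b x) := by
  funext t
  by_cases hti : t = i <;> by_cases htj : t = j <;>
    simp [hti, htj, hij, Ne.symm hij, insIdx] <;> (try split_ifs) <;> omega

lemma insIdx_shift {d : ℕ} {i : Fin d} {a b : ℕ} (hab : a < b) (x : Fin d → ℕ) :
    insIdx i b (insIdx i a x) = insIdx i a (insIdx i (b - 1) x) := by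
  funext t
  by_cases hti : t = i <;> simp [hti, insIdx] <;> (try split_ifs) <;> omega

lemma split {q d : ℕ} {i j : Fin d} {X Y W : Arr q d} {a b : ℕ}
    (hb : b ≤ X.size j)
    (hsX : ∀ t, W.size t = if t = j then X.size t + 1 else X.size t)
    (hvX : ∀ x hx hx', X.val x hx = W.val (insIdx j b x) hx')
    (ha : a ≤ Y.size i)
    (hsY : ∀ t, W.size t = if t = i then Y.size t + 1 else Y.size t)
    (hvY : ∀ x hx hx', Y.val x hx = W.val (insIdx i a x) hx')
    (hpos : 0 < X.size i)
    (hab : a ≤ b) :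
    ∃ Z, InsertsTo i Z X ∧ InsertsTo j Z Y := by
  rcases eq_or_ne i j with hij | hij
  · -- same axis
    subst hij
    have hsize : ∀ t, Y.size t = X.size t := by
      intro t; have h1 := hsX t; have h2 := hsY t
      by_cases ht : t = i
      · rw [if_pos ht] at h1 h2; omega
      · rw [if_neg ht] at h1 h2; omega
    rcases eq_or_lt_of_le hab with heq | hlt
    · -- a = b : X and Y are pointwise equal
      subst heq
      refine ⟨delArr i 0 X, delArr_insertsTo hpos, ?_⟩
      obtain ⟨_, _, hins⟩ := delArr_insertsTo (A := X) (i := i) (k := 0) hpos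
      refine ⟨?_, 0, ?_, ?_⟩
      · intro t
        have h2 := hsize t
        simp only [delArr]
        by_cases ht : t = i
        · subst ht; rw [if_pos rfl, if_pos rfl]; have := hpos; omega
        · rw [if_neg ht, if_neg ht]; omega
      · show (0:ℕ) ≤ if i = i then X.size i - 1 else X.size i
        simp
      · intro x hx hx'
        have hx'' : ∀ t, insIdx i 0 x t < X.size t := by
          intro t; have := hx' t; rwa [hsize t] at this
        have hb1 : ∀ t, insIdx i a (insIdx i 0 x) t < W.size t := by
          intro t
          have h3 := hx'' t; have h4 := hsY t; have h5 := hsize t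
          by_cases ht : t = i
          · subst ht; rw [if_pos rfl] at h4; simp [insIdx] at h3 ⊢
            split_ifs at * <;> omega
          · rw [if_neg ht] at h4; simp [insIdx, ht] at h3 ⊢; omega
        calc (delArr i 0 X).val x hx = X.val (insIdx i 0 x) hx'' := by simp only [delArr]
          _ = W.val (insIdx i a (insIdx i 0 x)) hb1 := hvX _ hx'' hb1
          _ = Y.val (insIdx i 0 x) hx' := (hvY _ hx' hb1).symm
    · -- a < b
      have haX : a < X.size i := by omega
      refine ⟨delArr i a X, delArr_insertsTo haX, ?_⟩
      refine ⟨?_, b - 1, ?_, ?_⟩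
      · intro t
        have h2 := hsize t
        simp only [delArr]
        by_cases ht : t = i
        · subst ht; rw [if_pos rfl, if_pos rfl]; omega
        · rw [if_neg ht, if_neg ht]; omega
      · show b - 1 ≤ if i = i then X.size i - 1 else X.size i
        simp; omega
      · intro x hx hx'
        have hxX : ∀ t, insIdx i a x t < X.size t := by
          intro t
          have h3 := hx t
          by_cases ht : t = i <;> simp [ht, delArr, insIdx] at h3 ⊢ <;> (try split_ifs) <;> omega
        have hb1 : ∀ t, insIdx i b (insIdx i a x) t < W.size t := by
          intro t
          have h3 := hxX t; have h4 := hsX t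
          by_cases ht : t = i
          · subst ht; rw [if_pos rfl] at h4; simp [insIdx] at h3 ⊢
            split_ifs at * <;> omega
          · rw [if_neg ht] at h4; simp [insIdx, ht] at h3 ⊢; omega
        have hb2 : ∀ t, insIdx i a (insIdx i (b-1) x) t < W.size t := by
          intro t; have := hb1 t; rwa [insIdx_shift hlt] at this
        calc (delArr i a X).val x hx = X.val (insIdx i a x) hxX := by simp only [delArr]
          _ = W.val (insIdx i b (insIdx i a x)) hb1 := hvX _ hxX hb1
          _ = W.val (insIdx i a (insIdx i (b-1) x)) hb2 := W.val_congr (insIdx_shift hlt x) hb1 hb2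
          _ = Y.val (insIdx i (b-1) x) hx' := (hvY _ hx' hb2).symm
  · -- different axes
    have hXi : X.size i = Y.size i + 1 := by
      have h1 := hsX i; have h2 := hsY i; simp [hij, Ne.symm hij] at h1 h2; omega
    have haX : a < X.size i := by omega
    refine ⟨delArr i a X, delArr_insertsTo haX, ?_⟩
    refine ⟨?_, b, ?_, ?_⟩
    · intro t
      have h1 := hsX t; have h2 := hsY t
      by_cases hti : t = i <;> by_cases htj : t = j <;>
        simp [hti, htj, hij, Ne.symm hij, delArr] at h1 h2 ⊢ <;> omega
    · show b ≤ if j = i then X.size j - 1 else X.size j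
      rw [if_neg (Ne.symm hij)]; exact hb
    · intro x hx hx'
      have hxX : ∀ t, insIdx i a x t < X.size t := by
        intro t
        have h3 := hx t
        by_cases ht : t = i <;> simp [ht, delArr, insIdx] at h3 ⊢ <;> (try split_ifs) <;> omega
      have hb1 : ∀ t, insIdx j b (insIdx i a x) t < W.size t := by
        intro t
        have h3 := hxX t; have h4 := hsX t
        by_cases hti : t = i
        · subst hti; rw [if_neg hij] at h4; simp [insIdx, hij] at h3 ⊢
          split_ifs at * <;> omega
        · by_cases htj : t = j
          · subst htj; rw [if_pos rfl] at h4; simp [insIdx, Ne.symm hij, hti] at h3 ⊢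
            split_ifs at * <;> omega
          · rw [if_neg htj] at h4; simp [insIdx, hti, htj] at h3 ⊢; omega
      have hb2 : ∀ t, insIdx i a (insIdx j b x) t < W.size t := by
        intro t; have := hb1 t; rwa [insIdx_comm hij] at this
      calc (delArr i a X).val x hx = X.val (insIdx i a x) hxX := by simp only [delArr]
        _ = W.val (insIdx j b (insIdx i a x)) hb1 := hvX _ hxX hb1
        _ = W.val (insIdx i a (insIdx j b x)) hb2 := W.val_congr (insIdx_comm hij a b x) hb1 hb2
        _ = Y.val (insIdx j b x) hx' := (hvY _ hx' hb2).symm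


lemma steps_eq_zero {q d : ℕ} {R : Fin d → Arr q d → Arr q d → Prop} {t : Fin d → ℕ}
    {A B : Arr q d} (h : Steps R t A B) (ht : t = 0) : A = B := by
  cases h with
  | refl => rfl
  | step i hR hs =>
    exfalso
    have := congrFun ht i
    simp [Pi.single_eq_same] at this

lemma steps_single {q d : ℕ} {R : Fin d → Arr q d → Arr q d → Prop} {i : Fin d}
    {A B : Arr q d} : Steps R (Pi.single i 1) A B ↔ R i A B := by
  constructor
  · intro h
    generalize hgen : (Pi.single i 1 : Fin d → ℕ) = t at h
    cases h with
    | refl =>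
      exfalso; have := congrFun hgen i; simp [Pi.single_eq_same] at this
    | step i' hR hs =>
      rename_i t' B'
      have h1 : i' = i := by
        by_contra hne
        have := congrFun hgen i'
        simp [Pi.single_eq_same, Pi.single_eq_of_ne hne] at this
      subst h1
      have h2 : t' = (0 : Fin d → ℕ) := funext fun c => by
        have := congrFun hgen c
        show t' c = 0
        by_cases hc : c = i'
        · subst hc; simp [Pi.single_eq_same] at this; omega
        · simp [Pi.single_eq_of_ne hc] at this; omega
      have := steps_eq_zero hs h2
      rwa [this] at hR
  · intro h
    have : (Pi.single i 1 : Fin d → ℕ) = 0 + Pi.single i 1 := by rw [zero_add]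
    rw [this]
    exact Steps.step i h (Steps.refl B)


/-- **Lemma 2** (prior 2D result). For a positive integer `m` and `i, j ∈ [2]`, and any
arrays `X ∈ Σ_q^{(m+δ₁(i)) × (m+δ₂(i))}` and `Y ∈ Σ_q^{(m+δ₁(j)) × (m+δ₂(j))}`,
`D_{e_i}(X) ∩ D_{e_j}(Y) ≠ ∅ ↔ I_{e_j}(X) ∩ I_{e_i}(Y) ≠ ∅`. -/
theorem statement1 (q m : ℕ) (hq : 2 ≤ q) (hm : 0 < m) (i j : Fin 2)
    (X Y : Arr q 2)
    (hX : X.size = fun ℓ => m + if ℓ = i then 1 else 0)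
    (hY : Y.size = fun ℓ => m + if ℓ = j then 1 else 0) :
    (delBall (Pi.single i 1) X ∩ delBall (Pi.single j 1) Y).Nonempty ↔
    (insBall (Pi.single j 1) X ∩ insBall (Pi.single i 1) Y).Nonempty := by
  have h0q : 0 < q := by omega
  constructor
  · rintro ⟨Z, hZX, hZY⟩
    have hXd : DeletesTo i X Z := steps_single.mp hZX
    have hYd : DeletesTo j Y Z := steps_single.mp hZY
    have hX' : InsertsTo i Z X := hXd
    have hY' : InsertsTo j Z Y := hYd
    obtain ⟨hsX, k, hk, hvX⟩ := hX'
    obtain ⟨hsY, l, hl, hvY⟩ := hY'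
    rcases le_total k l with hkl | hkl
    · obtain ⟨W, hW1, hW2⟩ := merge h0q hk hl hsX hvX hsY hvY hkl
      exact ⟨W, steps_single.mpr hW1, steps_single.mpr hW2⟩
    · obtain ⟨W, hW1, hW2⟩ := merge h0q hl hk hsY hvY hsX hvX hkl
      exact ⟨W, steps_single.mpr hW2, steps_single.mpr hW1⟩
  · rintro ⟨W, hWX, hWY⟩
    have hX' : InsertsTo j X W := steps_single.mp hWX
    have hY' : InsertsTo i Y W := steps_single.mp hWY
    obtain ⟨hsX, b, hb, hvX⟩ := hX'
    obtain ⟨hsY, a, ha, hvY⟩ := hY'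
    rcases le_total a b with hab | hab
    · obtain ⟨Z, hZ1, hZ2⟩ := split hb hsX hvX ha hsY hvY
        (by simp [hX]) hab
      exact ⟨Z, steps_single.mpr hZ1, steps_single.mpr hZ2⟩
    · obtain ⟨Z, hZ1, hZ2⟩ := split ha hsY hvY hb hsX hvX
        (by simp [hY]) hab
      exact ⟨Z, steps_single.mpr hZ2, steps_single.mpr hZ1⟩
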